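/- (Welfare loss under inconsistent strategies.) Let M be a positive integer, δ > 0, and let f̃ : 2^𝒩 → ℤ be an integer-valued rank function with f̃(𝒩) = M; write P̃ for the integral polymatroid defined by f̃. For each n ∈ 𝒩, let u_n, ũ_n : {0,1,…,M} → ℝ satisfy |ũ_n(y) − u_n(y)| ≤ yδ for every integer 0 ≤ y ≤ M. If ỹ* maximizes ∑_{n=1}^N ũ_n(y_n) over P̃, then for every y ∈ P̃: ∑_{n=1}^N u_n(y_n) − ∑_{n=1}^N u_n(ỹ*_n) ≤ 2Mδ. -/

import Mathlib

open Finset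

/-- Welfare loss under inconsistent strategies. If each reported utility `ũ_n`
satisfies `|ũ_n(y) − u_n(y)| ≤ yδ` on `{0,…,M}` and `ỹ*` maximizes `∑_n ũ_n(y_n)` over the
integral polymatroid `P̃` of `f̃` (with `f̃(𝒩) = M`), then for every `y ∈ P̃` the welfare
loss `∑_n u_n(y_n) − ∑_n u_n(ỹ*_n)` is at most `2Mδ`. -/
theorem quantizedVCG_statement_18 (N M : ℕ) (hN : 1 ≤ N) (hM : 0 < M)
    (δ : ℝ) (hδ : 0 < δ)
    (ft : Finset (Fin N) → ℤ)
    (hf_norm : ft ∅ = 0)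
    (hf_mono : ∀ S T : Finset (Fin N), S ⊆ T → ft S ≤ ft T)
    (hf_sub : ∀ S T : Finset (Fin N), ft (S ∩ T) + ft (S ∪ T) ≤ ft S + ft T)
    (hf_univ : ft Finset.univ = M)
    (u ut : Fin N → ℕ → ℝ)
    (hu : ∀ n : Fin N, ∀ m : ℕ, m ≤ M → |ut n m - u n m| ≤ (m : ℝ) * δ)
    (ytstar : Fin N → ℕ)
    (hyt_mem : ∀ S : Finset (Fin N), ∑ n ∈ S, (ytstar n : ℤ) ≤ ft S)
    (hyt_opt : ∀ y : Fin N → ℕ, (∀ S : Finset (Fin N), ∑ n ∈ S, (y n : ℤ) ≤ ft S) →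
      ∑ n, ut n (y n) ≤ ∑ n, ut n (ytstar n)) :
    ∀ y : Fin N → ℕ, (∀ S : Finset (Fin N), ∑ n ∈ S, (y n : ℤ) ≤ ft S) →
      ∑ n, u n (y n) - ∑ n, u n (ytstar n) ≤ 2 * (M : ℝ) * δ := by
  intro y hy
  -- bounds on individual coordinates
  have hle : ∀ (z : Fin N → ℕ), (∀ S : Finset (Fin N), ∑ n ∈ S, (z n : ℤ) ≤ ft S) →
      ∀ n, z n ≤ M := by
    intro z hz n
    have h1 := hz {n}
    simp at h1
    have h2 := hf_mono {n} Finset.univ (Finset.subset_univ _)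
    have : (z n : ℤ) ≤ (M : ℤ) := le_trans h1 (hf_univ ▸ h2)
    exact_mod_cast this
  have hsum : ∀ (z : Fin N → ℕ), (∀ S : Finset (Fin N), ∑ n ∈ S, (z n : ℤ) ≤ ft S) →
      (∑ n, (z n : ℝ)) ≤ (M : ℝ) := by
    intro z hz
    have h1 := hz Finset.univ
    rw [hf_univ] at h1
    have : (∑ n, (z n : ℤ) : ℤ) ≤ (M : ℤ) := h1
    calc (∑ n, (z n : ℝ)) = ((∑ n, (z n : ℤ) : ℤ) : ℝ) := by push_cast; ring
      _ ≤ (M : ℝ) := by exact_mod_cast this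
  -- ∑ u(y) ≤ ∑ ut(y) + Mδ
  have step1 : ∑ n, u n (y n) ≤ ∑ n, ut n (y n) + (M : ℝ) * δ := by
    have : ∑ n, u n (y n) ≤ ∑ n, (ut n (y n) + (y n : ℝ) * δ) := by
      apply Finset.sum_le_sum
      intro n _
      have h := hu n (y n) (hle y hy n)
      have := abs_le.mp h
      linarith [this.1]
    rw [Finset.sum_add_distrib] at this
    have h2 : ∑ n, (y n : ℝ) * δ ≤ (M : ℝ) * δ := by
      rw [← Finset.sum_mul]
      exact mul_le_mul_of_nonneg_right (hsum y hy) hδ.le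
    linarith
  have step2 : ∑ n, ut n (y n) ≤ ∑ n, ut n (ytstar n) := hyt_opt y hy
  have step3 : ∑ n, ut n (ytstar n) ≤ ∑ n, u n (ytstar n) + (M : ℝ) * δ := by
    have : ∑ n, ut n (ytstar n) ≤ ∑ n, (u n (ytstar n) + (ytstar n : ℝ) * δ) := by
      apply Finset.sum_le_sum
      intro n _
      have h := hu n (ytstar n) (hle ytstar hyt_mem n)
      have := abs_le.mp h
      linarith [this.2]
    rw [Finset.sum_add_distrib] at this
    have h2 : ∑ n, (ytstar n : ℝ) * δ ≤ (M : ℝ) * δ := by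
      rw [← Finset.sum_mul]
      exact mul_le_mul_of_nonneg_right (hsum ytstar hyt_mem) hδ.le
    linarith
  linarith
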